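/- Let L and L' be relational first-order languages (no function or constant symbols), let 𝒜 be an L-structure and ℬ an L'-structure, and suppose 𝒜 is a semi-retract of ℬ via (g, f). Let A be a finite substructure of 𝒜 and let A₀ be the substructure of ℬ with underlying set g(A). If d ≥ 1 is an integer such that ℬ → (C)^{A₀}_{r,d} for every finite substructure C of ℬ and every integer r ≥ 2, then 𝒜 → (B)^A_{r,d} for every finite substructure B of 𝒜 and every integer r ≥ 2; that is, the Ramsey degree of A in 𝒜 is bounded by the Ramsey degree of A₀ in ℬ. -/

import Mathlib

open FirstOrder FirstOrder.Language

/-- Two same-length tuples have the same quantifier-free type over ∅. -/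
def SameQfType (L : FirstOrder.Language) (M : Type*) [L.Structure M] {n : ℕ}
    (x y : Fin n → M) : Prop :=
  ∀ φ : L.Formula (Fin n), φ.IsQF → (φ.Realize x ↔ φ.Realize y)

/-- A qftp-respecting injection between structures in possibly different languages. -/
def QftpRespecting (L L' : FirstOrder.Language) (M N : Type*) [L.Structure M] [L'.Structure N]
    (h : M → N) : Prop :=
  Function.Injective h ∧
    ∀ (n : ℕ) (x y : Fin n → M), SameQfType L M x y → SameQfType L' N (h ∘ x) (h ∘ y)

/-- `(g, f)` is a semi-retraction between `M` and `N`: both maps are qftp-respecting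
injections and `f ∘ g` is qftp-preserving (equivalently, an `L`-embedding of `M` into `M`). -/
def IsSemiRetraction (L L' : FirstOrder.Language) (M N : Type*)
    [L.Structure M] [L'.Structure N] (g : M → N) (f : N → M) : Prop :=
  QftpRespecting L L' M N g ∧ QftpRespecting L' L N M f ∧
    ∀ (n : ℕ) (x : Fin n → M), SameQfType L M x (f ∘ g ∘ x)

/-- `M` is locally finite: every finitely generated substructure is finite. -/
def StructLocallyFinite (L : FirstOrder.Language) (M : Type*) [L.Structure M] : Prop :=
  ∀ S : L.Substructure M, S.FG → (S : Set M).Finite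

/-- `M → (B)^A_{r,d}` for substructures. -/
def ArrowSub (L : FirstOrder.Language) (M : Type*) [L.Structure M]
    (A B : L.Substructure M) (r d : ℕ) : Prop :=
  ∀ c : L.Substructure M → Fin r, ∃ B' : L.Substructure M,
    Nonempty (B' ≃[L] B) ∧
      (c '' {A' : L.Substructure M | A' ≤ B' ∧ Nonempty (A' ≃[L] A)}).ncard ≤ d

/-- `M →ᵉ (B)^A_{r,d}` for embeddings. -/
def ArrowEmb (L : FirstOrder.Language) (M : Type*) [L.Structure M]
    (A B : L.Substructure M) (r d : ℕ) : Prop :=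
  ∀ c : (A ↪[L] M) → Fin r, ∃ h : B ↪[L] M,
    (c '' {j : A ↪[L] M | ∃ e : A ↪[L] B, j = h.comp e}).ncard ≤ d

/-- A structure is rigid if its only automorphism is the identity. -/
def IsRigidStructure (L : FirstOrder.Language) (M : Type*) [L.Structure M] : Prop :=
  ∀ σ : M ≃[L] M, ∀ x : M, σ x = x


section Helpers

variable {L : FirstOrder.Language} {M : Type*} [L.Structure M]

lemma SameQfType.symm' {n} {x y : Fin n → M} (h : SameQfType L M x y) : SameQfType L M y x :=
  fun φ hφ => (h φ hφ).symm

lemma SameQfType.trans' {n} {x y z : Fin n → M} (h1 : SameQfType L M x y)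
    (h2 : SameQfType L M y z) : SameQfType L M x z := fun φ hφ => (h1 φ hφ).trans (h2 φ hφ)

lemma SameQfType.eq_iff {n} {x y : Fin n → M} (h : SameQfType L M x y) (i j : Fin n) :
    (x i = x j) ↔ (y i = y j) := by
  have := h (Term.equal (Term.var i) (Term.var j)) (BoundedFormula.IsAtomic.equal _ _).isQF
  simpa [Formula.realize_equal] using this

lemma SameQfType.rel_iff {n} {x y : Fin n → M} (h : SameQfType L M x y) {m}
    (R : L.Relations m) (k : Fin m → Fin n) :
    Structure.RelMap R (x ∘ k) ↔ Structure.RelMap R (y ∘ k) := by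
  have := h (R.formula fun j => Term.var (k j)) (BoundedFormula.IsAtomic.rel _ _).isQF
  simpa [Formula.realize_rel, Function.comp_def] using this

lemma realize_qf_embedding_bd {P : Type*} [L.Structure P] (j : P ↪[L] M) {n k : ℕ}
    {φ : L.BoundedFormula (Fin n) k} (hφ : φ.IsQF) (v : Fin n → P) (xs : Fin k → P) :
    φ.Realize (⇑j ∘ v) (⇑j ∘ xs) ↔ φ.Realize v xs := by
  induction hφ with
  | falsum => rfl
  | of_isAtomic h =>
    cases h with
    | equal t₁ t₂ =>
      simp only [BoundedFormula.realize_bdEqual, ← Sum.comp_elim, HomClass.realize_term]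
      exact j.injective.eq_iff
    | rel R ts =>
      simp only [BoundedFormula.realize_rel, ← Sum.comp_elim, HomClass.realize_term]
      exact StrongHomClass.map_rel j R _
  | imp _ _ ih1 ih2 => simp [BoundedFormula.realize_imp, ih1, ih2]

lemma realize_qf_embedding {P : Type*} [L.Structure P] (j : P ↪[L] M) {n : ℕ}
    {φ : L.Formula (Fin n)} (hφ : φ.IsQF) (v : Fin n → P) :
    φ.Realize (⇑j ∘ v) ↔ φ.Realize v := by
  rw [Formula.Realize, Formula.Realize, ← realize_qf_embedding_bd j hφ v default,
    Unique.eq_default (⇑j ∘ default)]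

lemma sameQfType_subtype_equiv {S T : L.Substructure M} (σ : S ≃[L] T) {n} (v : Fin n → S) :
    SameQfType L M ((↑) ∘ v) ((↑) ∘ ⇑σ ∘ v) := by
  intro φ hφ
  rw [show ((↑) ∘ v : Fin n → M) = ⇑S.subtype ∘ v from rfl, realize_qf_embedding S.subtype hφ,
    show (((↑) ∘ ⇑σ ∘ v) : Fin n → M) = ⇑(T.subtype.comp σ.toEmbedding) ∘ v from rfl,
    realize_qf_embedding _ hφ]

lemma nonempty_iso_of_sameQfType [L.IsRelational] {n} {x y : Fin n → M}
    (h : SameQfType L M x y) {S T : L.Substructure M}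
    (hS : (S : Set M) = Set.range x) (hT : (T : Set M) = Set.range y) :
    Nonempty (S ≃[L] T) := by
  classical
  have hxS : ∀ i, x i ∈ S := fun i => by rw [← SetLike.mem_coe, hS]; exact ⟨i, rfl⟩
  have hyT : ∀ i, y i ∈ T := fun i => by rw [← SetLike.mem_coe, hT]; exact ⟨i, rfl⟩
  have hmemS : ∀ a : S, ∃ i, x i = (a : M) := fun a => by
    have := a.2; rw [← SetLike.mem_coe, hS] at this; exact this
  have hmemT : ∀ b : T, ∃ i, y i = (b : M) := fun b => by
    have := b.2; rw [← SetLike.mem_coe, hT] at this; exact this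
  refine ⟨{ toFun := fun a => ⟨y (hmemS a).choose, hyT _⟩
            invFun := fun b => ⟨x (hmemT b).choose, hxS _⟩
            left_inv := ?_
            right_inv := ?_
            map_fun' := fun {m} F => isEmptyElim F
            map_rel' := ?_ }⟩
  · rintro ⟨a, ha⟩
    apply Subtype.ext
    have h1 := (hmemS ⟨a, ha⟩).choose_spec
    have h2 := (hmemT ⟨y (hmemS ⟨a, ha⟩).choose, hyT _⟩).choose_spec
    simp only at h2 ⊢
    exact ((h.eq_iff _ _).mpr h2).trans h1
  · rintro ⟨b, hb⟩
    apply Subtype.ext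
    have h1 := (hmemT ⟨b, hb⟩).choose_spec
    have h2 := (hmemS ⟨x (hmemT ⟨b, hb⟩).choose, hxS _⟩).choose_spec
    simp only at h2 ⊢
    exact ((h.eq_iff _ _).mp h2).trans h1
  · intro m R v
    show Structure.RelMap R (fun i => (y (hmemS (v i)).choose : M)) ↔
      Structure.RelMap R (fun i => ((v i) : M))
    have hk : ∀ i, x ((hmemS (v i)).choose) = ((v i) : M) := fun i => (hmemS (v i)).choose_spec
    have hiff := h.rel_iff R (fun i => (hmemS (v i)).choose)
    simp only [Function.comp_def] at hiff
    rw [← hiff]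
    exact iff_of_eq (congrArg _ (funext hk))

lemma exists_enum {s : Set M} (h : s.Finite) :
    ∃ (n : ℕ) (e : Fin n → M), Function.Injective e ∧ Set.range e = s := by
  have := h.to_subtype
  obtain ⟨n, ⟨eq⟩⟩ := Finite.exists_equiv_fin s
  refine ⟨n, Subtype.val ∘ eq.symm, Subtype.val_injective.comp eq.symm.injective, ?_⟩
  rw [Set.range_comp, Equiv.range_eq_univ, Set.image_univ, Subtype.range_coe]

end Helpers

/-- Theorem 5.8 / `fmla_free_relational`: for relational languages, if `𝒜` is a
semi-retract of `ℬ` via `(g, f)`, `A` is a finite substructure of `𝒜` and the substructure `A₀`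
of `ℬ` with underlying set `g(A)` has Ramsey degree at most `d` in `ℬ`, then `A` has Ramsey
degree at most `d` in `𝒜`. -/
theorem semiRetraction_transfers_Ramsey_degree_relational
    {L L' : FirstOrder.Language} [L.IsRelational] [L'.IsRelational]
    {M N : Type*} [L.Structure M] [L'.Structure N]
    (g : M → N) (f : N → M)
    (hsr : IsSemiRetraction L L' M N g f)
    (A : L.Substructure M) (hAfin : (A : Set M).Finite)
    (A₀ : L'.Substructure N) (hA₀ : (A₀ : Set N) = g '' (A : Set M))
    (d : ℕ) (hd : 1 ≤ d)
    (hdeg : ∀ C : L'.Substructure N, (C : Set N).Finite → ∀ r : ℕ, 2 ≤ r →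
      ArrowSub L' N A₀ C r d) :
    ∀ B : L.Substructure M, (B : Set M).Finite → ∀ r : ℕ, 2 ≤ r →
      ArrowSub L M A B r d := by
  classical
  obtain ⟨⟨hg_inj, hg⟩, ⟨hf_inj, hf⟩, hfg⟩ := hsr
  intro B hBfin r hr c
  obtain ⟨nB, b, hb_inj, hb_range⟩ := exists_enum hBfin
  obtain ⟨nA, a, ha_inj, ha_range⟩ := exists_enum hAfin
  -- the copy of B in N
  set C : L'.Substructure N := Substructure.closure L' (g '' (B : Set M)) with hCdef
  have hC_coe : (C : Set N) = g '' (B : Set M) :=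
    Substructure.closure_eq_of_isRelational L' _
  have hCfin : (C : Set N).Finite := by rw [hC_coe]; exact hBfin.image g
  -- the transferred coloring
  set c' : L'.Substructure N → Fin r :=
    fun S => c (Substructure.closure L (f '' (S : Set N))) with hc'def
  obtain ⟨C', ⟨σ⟩, hC'card⟩ := hdeg C hCfin r hr c'
  -- the tuple g ∘ b enumerates C
  have hgb_mem : ∀ i, g (b i) ∈ C := by
    intro i
    rw [← SetLike.mem_coe, hC_coe]
    exact ⟨b i, by rw [← hb_range]; exact ⟨i, rfl⟩, rfl⟩
  set gb : Fin nB → C := fun i => ⟨g (b i), hgb_mem i⟩ with hgbdef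
  -- transferring along σ.symm gives an enumeration of C'
  set u1 : Fin nB → N := (↑) ∘ ⇑σ.symm ∘ gb with hu1def
  have h1 : SameQfType L' N (g ∘ b) u1 := sameQfType_subtype_equiv σ.symm gb
  have hgb_surj : Function.Surjective gb := by
    rintro ⟨z, hz⟩
    rw [← SetLike.mem_coe, hC_coe] at hz
    obtain ⟨m, hm, rfl⟩ := hz
    rw [← hb_range] at hm
    obtain ⟨i, rfl⟩ := hm
    exact ⟨i, rfl⟩
  have hsurj2 : Function.Surjective (⇑σ.symm ∘ gb) := σ.symm.toEquiv.surjective.comp hgb_surj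
  have hu1_range : Set.range u1 = (C' : Set N) := by
    rw [hu1def, Set.range_comp ((↑) : C' → N), Set.range_eq_univ.mpr hsurj2, Set.image_univ,
      Subtype.range_coe]
  -- the copy of B in M obtained by pulling back C'
  set B' : L.Substructure M := Substructure.closure L (f '' (C' : Set N)) with hB'def
  have hB'_coe : (B' : Set M) = f '' (C' : Set N) :=
    Substructure.closure_eq_of_isRelational L _
  set w : Fin nB → M := f ∘ u1 with hwdef
  have h2 : SameQfType L M (f ∘ (g ∘ b)) w := hf nB (g ∘ b) u1 h1
  have h3 : SameQfType L M b (f ∘ (g ∘ b)) := hfg nB b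
  have hbw : SameQfType L M b w := h3.trans' h2
  have hw_range : Set.range w = (B' : Set M) := by
    rw [hwdef, Set.range_comp, hu1_range, hB'_coe]
  have hB'B : Nonempty (B' ≃[L] B) :=
    nonempty_iso_of_sameQfType hbw.symm' hw_range.symm hb_range.symm
  refine ⟨B', hB'B, le_trans (Set.ncard_le_ncard ?_ (Set.toFinite _)) hC'card⟩
  rintro _ ⟨A', ⟨hA'le, ⟨τ⟩⟩, rfl⟩
  have hA'sub : (A' : Set M) ⊆ (B' : Set M) := SetLike.coe_subset_coe.mpr hA'le
  -- enumeration of A' with same qf type as a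
  have haA_mem : ∀ i, a i ∈ A := fun i => by
    rw [← SetLike.mem_coe, ← ha_range]; exact ⟨i, rfl⟩
  set aA : Fin nA → A := fun i => ⟨a i, haA_mem i⟩ with haAdef
  set a' : Fin nA → M := (↑) ∘ ⇑τ.symm ∘ aA with ha'def
  have haa' : SameQfType L M a a' := sameQfType_subtype_equiv τ.symm aA
  have haA_surj : Function.Surjective aA := by
    rintro ⟨z, hz⟩
    rw [← SetLike.mem_coe, ← ha_range] at hz
    obtain ⟨i, rfl⟩ := hz
    exact ⟨i, rfl⟩
  have hsurj3 : Function.Surjective (⇑τ.symm ∘ aA) := τ.symm.toEquiv.surjective.comp haA_surj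
  have ha'_range : Set.range a' = (A' : Set M) := by
    rw [ha'def, Set.range_comp ((↑) : A' → M), Set.range_eq_univ.mpr hsurj3, Set.image_univ,
      Subtype.range_coe]
  -- choose preimages of a' in C'
  have hex : ∀ i, a' i ∈ f '' (C' : Set N) := fun i => by
    rw [← hB'_coe]; exact hA'sub (by rw [← ha'_range]; exact ⟨i, rfl⟩)
  set u : Fin nA → N := fun i => (hex i).choose with hudef
  have hu : ∀ i, u i ∈ (C' : Set N) ∧ f (u i) = a' i := fun i => (hex i).choose_spec
  set S₀ : Set N := {z | z ∈ (C' : Set N) ∧ f z ∈ (A' : Set M)} with hS₀def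
  have hS₀range : S₀ = Set.range u := by
    ext z
    constructor
    · rintro ⟨hz1, hz2⟩
      rw [← ha'_range] at hz2
      obtain ⟨i, hi⟩ := hz2
      exact ⟨i, hf_inj ((hu i).2.trans hi)⟩
    · rintro ⟨i, rfl⟩
      refine ⟨(hu i).1, ?_⟩
      rw [(hu i).2, ← ha'_range]
      exact ⟨i, rfl⟩
  set A₀' : L'.Substructure N := Substructure.closure L' S₀ with hA₀'def
  have hA₀'_coe : (A₀' : Set N) = S₀ := Substructure.closure_eq_of_isRelational L' _
  have hA₀'le : A₀' ≤ C' := (Substructure.closure_le).2 fun z hz => hz.1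
  -- A₀' is isomorphic to A₀
  set u' : Fin nA → C' := fun i => ⟨u i, (hu i).1⟩ with hu'def
  set t : Fin nA → N := (↑) ∘ ⇑σ ∘ u' with htdef
  have h4 : SameQfType L' N u t := sameQfType_subtype_equiv σ u'
  have hexp : ∀ i, ∃ m, m ∈ (B : Set M) ∧ g m = t i := fun i => by
    have h5 : t i ∈ (C : Set N) := (σ (u' i)).2
    rw [hC_coe] at h5
    exact h5
  set p : Fin nA → M := fun i => (hexp i).choose with hpdef
  have hgp : g ∘ p = t := funext fun i => (hexp i).choose_spec.2
  have h6 : SameQfType L M (f ∘ u) (f ∘ t) := hf nA u t h4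
  have hfu : f ∘ u = a' := funext fun i => (hu i).2
  have h8 : SameQfType L M (f ∘ t) a' := by rw [← hfu]; exact h6.symm'
  have h7' : SameQfType L M p (f ∘ t) := by rw [← hgp]; exact hfg nA p
  have h10 : SameQfType L M p a := (h7'.trans' h8).trans' haa'.symm'
  have h11 : SameQfType L' N t (g ∘ a) := by rw [← hgp]; exact hg nA p a h10
  have h12 : SameQfType L' N u (g ∘ a) := h4.trans' h11
  have hA₀range : (A₀ : Set N) = Set.range (g ∘ a) := by
    rw [hA₀, ← ha_range, ← Set.range_comp]
  have hA₀'range : (A₀' : Set N) = Set.range u := by rw [hA₀'_coe, hS₀range]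
  have hiso : Nonempty (A₀' ≃[L'] A₀) := nonempty_iso_of_sameQfType h12 hA₀'range hA₀range
  refine ⟨A₀', ⟨hA₀'le, hiso⟩, ?_⟩
  -- the colors agree
  have hfS₀ : f '' S₀ = (A' : Set M) := by
    apply Set.Subset.antisymm
    · rintro _ ⟨z, hz, rfl⟩
      exact hz.2
    · intro m hm
      have hm' : m ∈ f '' (C' : Set N) := by rw [← hB'_coe]; exact hA'sub hm
      obtain ⟨z, hz, rfl⟩ := hm'
      exact ⟨z, ⟨hz, hm⟩, rfl⟩
  show c (Substructure.closure L (f '' (A₀' : Set N))) = c A'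
  rw [hA₀'_coe, hfS₀, Substructure.closure_eq]
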